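/- Let Φ(t,s) = a t³ + b t² s + c t s² + d s³ be nondegenerate (matrix [[3a,2b,c],[b,2c,3d]] of rank 2), and define r(t₀,s₀) = (−3at₀² − 2bt₀s₀ − cs₀², −bt₀² − 2ct₀s₀ − 3ds₀², t₀, s₀) ∈ ℝ⁴. If u, v, w ∈ ℝ⁴ are linearly independent, then the determinant of the 4×4 matrix with rows r(t₀,s₀), u, v, w is not identically zero as a polynomial in (t₀,s₀). -/
import Mathlib


/-- for nondegenerate Φ and linearly independent u, v, w ∈ ℝ⁴,
the determinant of the 4×4 matrix with rows r(t₀,s₀), u, v, w is not identically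
zero as a polynomial in (t₀,s₀). -/
theorem stmt10 (a b c d : ℝ)
    (hrank : (Matrix.rank !![3 * a, 2 * b, c; b, 2 * c, 3 * d]) = 2)
    (u v w : Fin 4 → ℝ)
    (hindep : LinearIndependent ℝ ![u, v, w]) :
    ∃ t₀ s₀ : ℝ,
      (Matrix.det (Matrix.of
        ![(![-(3 * a * t₀ ^ 2) - 2 * b * t₀ * s₀ - c * s₀ ^ 2,
            -(b * t₀ ^ 2) - 2 * c * t₀ * s₀ - 3 * d * s₀ ^ 2, t₀, s₀] : Fin 4 → ℝ),
          u, v, w])) ≠ 0 := by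
  by_contra hcon
  push_neg at hcon
  -- multilinear expansion of the determinant in the first row
  obtain ⟨q0, q1, q2, q3, key⟩ : ∃ q0 q1 q2 q3 : ℝ, ∀ x : Fin 4 → ℝ,
      Matrix.det (Matrix.of ![x, u, v, w]) = x 0 * q0 + x 1 * q1 + x 2 * q2 + x 3 * q3 := by
    refine ⟨Matrix.det (Matrix.of ![(![1,0,0,0] : Fin 4 → ℝ), u, v, w]),
      Matrix.det (Matrix.of ![(![0,1,0,0] : Fin 4 → ℝ), u, v, w]),
      Matrix.det (Matrix.of ![(![0,0,1,0] : Fin 4 → ℝ), u, v, w]),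
      Matrix.det (Matrix.of ![(![0,0,0,1] : Fin 4 → ℝ), u, v, w]), fun x => ?_⟩
    simp [Matrix.det_succ_row_zero, Fin.sum_univ_succ, Fin.succAbove,
      show (Fin.succ 2 : Fin 4) = 3 from rfl, show (Fin.castSucc 2 : Fin 4) = 2 from rfl,
      show ((1 : Fin 4) < Fin.succ 2) from by decide]
    ring
  have hq : ∀ t s : ℝ,
      (-(3 * a * t ^ 2) - 2 * b * t * s - c * s ^ 2) * q0 +
      (-(b * t ^ 2) - 2 * c * t * s - 3 * d * s ^ 2) * q1 + t * q2 + s * q3 = 0 := by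
    intro t s
    have h1 := key (![-(3 * a * t ^ 2) - 2 * b * t * s - c * s ^ 2,
      -(b * t ^ 2) - 2 * c * t * s - 3 * d * s ^ 2, t, s] : Fin 4 → ℝ)
    rw [hcon t s] at h1
    have h2 := h1.symm
    simpa using h2
  have hq2 : q2 = 0 := by linear_combination (hq 1 0 - hq (-1) 0) / 2
  have hq3 : q3 = 0 := by linear_combination (hq 0 1 - hq 0 (-1)) / 2
  have e1 : 3 * a * q0 + b * q1 = 0 := by linear_combination (-(hq 1 0) - hq (-1) 0) / 2
  have e3 : c * q0 + 3 * d * q1 = 0 := by linear_combination (-(hq 0 1) - hq 0 (-1)) / 2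
  have e2 : 2 * b * q0 + 2 * c * q1 = 0 := by
    linear_combination (hq (-1) 1 - hq 1 1) / 2 + hq2
  -- rank argument: the rows of the coefficient matrix are independent
  set Mm : Matrix (Fin 2) (Fin 3) ℝ := !![3 * a, 2 * b, c; b, 2 * c, 3 * d] with hMm
  have hrt : Mm.transpose.rank = 2 := by rw [Matrix.rank_transpose]; exact hrank
  have hker : LinearMap.ker (Mm.transpose.mulVecLin) = ⊥ := by
    have h1 := LinearMap.finrank_range_add_finrank_ker (Mm.transpose.mulVecLin)
    rw [show Module.finrank ℝ (LinearMap.range Mm.transpose.mulVecLin) = Mm.transpose.rank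
      from rfl, hrt] at h1
    have h2 : Module.finrank ℝ (Fin 2 → ℝ) = 2 := by simp
    rw [h2] at h1
    have h3 : Module.finrank ℝ (LinearMap.ker Mm.transpose.mulVecLin) = 0 := by omega
    exact Submodule.finrank_eq_zero.mp h3
  have hinj : Function.Injective (Mm.transpose.mulVecLin) := LinearMap.ker_eq_bot.mp hker
  have hmv : Mm.transpose.mulVecLin ![q0, q1] = Mm.transpose.mulVecLin 0 := by
    rw [map_zero]
    ext i
    fin_cases i <;>
      simp [Matrix.mulVecLin_apply, Matrix.mulVec, dotProduct, Fin.sum_univ_two, hMm,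
        Matrix.transpose] <;>
      linarith [e1, e2, e3]
  have hz : (![q0, q1] : Fin 2 → ℝ) = 0 := hinj hmv
  have hq0 : q0 = 0 := congrFun hz 0
  have hq1 : q1 = 0 := congrFun hz 1
  -- now every determinant with rows u, v, w vanishes, contradicting independence
  have hspan : Submodule.span ℝ (Set.range ![u, v, w]) ≠ ⊤ := by
    intro hT
    have h3 : Module.finrank ℝ (Submodule.span ℝ (Set.range ![u, v, w])) = 3 := by
      rw [finrank_span_eq_card hindep]; simp
    rw [hT] at h3
    have h4 : Module.finrank ℝ (⊤ : Submodule ℝ (Fin 4 → ℝ)) = 4 := by simp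
    omega
  obtain ⟨x0, hx0⟩ : ∃ x, x ∉ Submodule.span ℝ (Set.range ![u, v, w]) := by
    by_contra hall
    push_neg at hall
    exact hspan (Submodule.eq_top_iff'.mpr hall)
  have hind4 : LinearIndependent ℝ (Fin.cons x0 ![u, v, w]) :=
    linearIndependent_fin_cons.mpr ⟨hindep, hx0⟩
  have hind4' : LinearIndependent ℝ (fun i => (Matrix.of ![x0, u, v, w]) i) := hind4
  have hdet : Matrix.det (Matrix.of ![x0, u, v, w]) ≠ 0 :=
    ((Matrix.isUnit_iff_isUnit_det _).mp
      (Matrix.linearIndependent_rows_iff_isUnit.mp hind4')).ne_zero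
  apply hdet
  rw [key x0, hq0, hq1, hq2, hq3]
  ring
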